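/- For every natural number L, define B(L) = Σ_j (-1)^j q^(2j²-2j) [2L choose L-2j]_q. Then B(L) = q^L ∏_{k=0}^{L-1} (1 + q^(2k-1)); in particular B(L), viewed as a Laurent polynomial, has nonnegative coefficients. -/

import Mathlib

open LaurentPolynomial Finset

noncomputable section

/-- Gaussian binomial coefficient with natural indices, in base `x`, defined by the
`q`-Pascal recurrence `[n+1, k+1] = [n, k] + x^(k+1) * [n, k+1]`.  It vanishes for `k > n`. -/
def gaussAux (x : LaurentPolynomial ℤ) : ℕ → ℕ → LaurentPolynomial ℤ
  | _, 0 => 1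
  | 0, _ + 1 => 0
  | n + 1, k + 1 => gaussAux x n k + x ^ (k + 1) * gaussAux x n (k + 1)

/-- The Gaussian binomial coefficient `[n choose k]` in base `x`, for integer indices:
it is zero when `n < 0` or `k < 0` (and, by `gaussAux`, also when `k > n`). -/
def qbin (x : LaurentPolynomial ℤ) (n k : ℤ) : LaurentPolynomial ℤ :=
  if 0 ≤ n ∧ 0 ≤ k then gaussAux x n.toNat k.toNat else 0

/-- `(-1)^j` for an integer `j`, as a Laurent polynomial. -/
def m1 (j : ℤ) : LaurentPolynomial ℤ := ((((-1 : ℤˣ) ^ j : ℤˣ) : ℤ) : LaurentPolynomial ℤ)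

/-! ### Basic lemmas on `gaussAux` and `qbin` -/

lemma gaussAux_zero_right (x : LaurentPolynomial ℤ) (n : ℕ) : gaussAux x n 0 = 1 := by
  cases n <;> rfl

lemma gaussAux_of_lt (x : LaurentPolynomial ℤ) : ∀ n k : ℕ, n < k → gaussAux x n k = 0
  | 0, _+1, _ => rfl
  | n+1, k+1, h => by
      rw [gaussAux, gaussAux_of_lt x n k (by omega), gaussAux_of_lt x n (k+1) (by omega)]
      ring

lemma qbin_natCast (x : LaurentPolynomial ℤ) (m j : ℕ) :
    qbin x (m : ℤ) (j : ℤ) = gaussAux x m j := by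
  simp [qbin]

lemma qbin_neg_right (x : LaurentPolynomial ℤ) {n k : ℤ} (h : k < 0) : qbin x n k = 0 := by
  rw [qbin, if_neg (by omega)]

lemma qbin_of_lt (x : LaurentPolynomial ℤ) {n k : ℤ} (h : n < k) : qbin x n k = 0 := by
  rcases lt_or_ge k 0 with hk | hk
  · exact qbin_neg_right x hk
  rcases lt_or_ge n 0 with hn | hn
  · rw [qbin, if_neg (by omega)]
  · rw [qbin, if_pos ⟨hn, hk⟩, gaussAux_of_lt]; omega

lemma qbin_zero_right (x : LaurentPolynomial ℤ) {n : ℤ} (h : 0 ≤ n) : qbin x n 0 = 1 := by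
  rw [qbin, if_pos ⟨h, le_refl 0⟩, Int.toNat_zero, gaussAux_zero_right]

lemma qbin_pascal1 (m : ℕ) (k : ℤ) :
    qbin (T 1) ((m : ℤ) + 1) k = qbin (T 1) m (k - 1) + T k * qbin (T 1) m k := by
  rcases lt_trichotomy k 0 with hk | rfl | hk
  · rw [qbin_neg_right _ hk, qbin_neg_right _ hk, qbin_neg_right _ (by omega : k - 1 < 0)]
    ring
  · rw [qbin_zero_right _ (by positivity), qbin_zero_right _ (Int.ofNat_nonneg m),
      qbin_neg_right _ (by omega : (0:ℤ) - 1 < 0), T_zero]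
    ring
  · obtain ⟨j, rfl⟩ : ∃ j : ℕ, k = ((j + 1 : ℕ) : ℤ) := ⟨(k - 1).toNat, by omega⟩
    rw [show ((j + 1 : ℕ) : ℤ) - 1 = ((j : ℕ) : ℤ) by push_cast; ring,
      show ((m : ℤ) + 1) = ((m + 1 : ℕ) : ℤ) by push_cast; ring,
      qbin_natCast, qbin_natCast, qbin_natCast, gaussAux,
      show (T ((j + 1 : ℕ) : ℤ) : LaurentPolynomial ℤ) = T 1 ^ (j + 1) by
        rw [T_pow]; congr 1; push_cast; ring]

lemma qbin_pascal2 (m : ℕ) (k : ℤ) :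
    qbin (T 1) ((m : ℤ) + 1) k = T ((m : ℤ) + 1 - k) * qbin (T 1) m (k - 1) + qbin (T 1) m k := by
  induction m generalizing k with
  | zero =>
    simp only [Nat.cast_zero, zero_add]
    rcases lt_trichotomy k 0 with hk | rfl | hk
    · rw [qbin_neg_right _ hk, qbin_neg_right _ hk, qbin_neg_right _ (by omega : k - 1 < 0)]
      ring
    · rw [qbin_zero_right _ (by norm_num), qbin_zero_right _ le_rfl,
        qbin_neg_right _ (by norm_num : (0:ℤ) - 1 < 0)]
      ring
    · rcases eq_or_lt_of_le (by omega : (1:ℤ) ≤ k) with rfl' | hk2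
      · obtain rfl : k = 1 := by omega
        have h11 : qbin (T 1) 1 1 = gaussAux (T 1) 1 1 := by exact_mod_cast qbin_natCast (T 1) 1 1
        rw [h11, show (1:ℤ)-1 = 0 by ring, qbin_zero_right _ le_rfl, T_zero,
          qbin_of_lt _ (by norm_num : (0:ℤ) < 1), gaussAux,
          gaussAux_zero_right, gaussAux_of_lt _ 0 1 (by omega)]
        ring
      · rw [qbin_of_lt _ (by omega), qbin_of_lt _ (by omega), qbin_of_lt _ (by omega)]
        ring
  | succ m ih =>
    push_cast
    rw [show (m : ℤ) + 1 + 1 = ((m + 1 : ℕ) : ℤ) + 1 by push_cast; ring, qbin_pascal1,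
      show ((m + 1 : ℕ) : ℤ) = (m : ℤ) + 1 by push_cast; ring]
    conv_lhs => rw [ih (k - 1), ih k]
    conv_rhs => rw [qbin_pascal1 m (k - 1), qbin_pascal1 m k]
    simp only [mul_add, add_mul, mul_one, one_mul, ← mul_assoc, ← T_add]
    ring_nf

lemma qbin_symm (m : ℕ) (k : ℤ) : qbin (T 1) m k = qbin (T 1) m ((m : ℤ) - k) := by
  induction m generalizing k with
  | zero =>
    simp only [Nat.cast_zero, zero_sub]
    rcases lt_trichotomy k 0 with hk | rfl | hk
    · rw [qbin_neg_right _ hk, qbin_of_lt _ (by omega : (0:ℤ) < -k)]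
    · norm_num
    · rw [qbin_of_lt _ hk, qbin_neg_right _ (by omega : -k < 0)]
  | succ m ih =>
    push_cast
    conv_lhs => rw [qbin_pascal1 m k, ih (k - 1), ih k]
    conv_rhs => rw [qbin_pascal2 m ((m : ℤ) + 1 - k)]
    ring_nf

lemma qbin_expand (m : ℕ) (k : ℤ) :
    qbin (T 1) ((m : ℤ) + 2) k = T ((m : ℤ) + 2 - k) * qbin (T 1) m (k - 2)
      + (1 + T ((m : ℤ) + 1)) * qbin (T 1) m (k - 1) + T k * qbin (T 1) m k := by
  rw [show (m : ℤ) + 2 = ((m + 1 : ℕ) : ℤ) + 1 by push_cast; ring, qbin_pascal1 (m + 1) k,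
    show ((m + 1 : ℕ) : ℤ) = (m : ℤ) + 1 by push_cast; ring,
    qbin_pascal2 m (k - 1), qbin_pascal2 m k]
  simp only [mul_add, add_mul, one_mul, mul_one, ← mul_assoc, ← T_add]
  ring_nf

/-! ### Support and sign lemmas -/

lemma supp_finite (c : ℤ → LaurentPolynomial ℤ) (n b : ℤ) :
    (Function.support fun j : ℤ => c j * qbin (T 1) n (b - 2 * j)).Finite := by
  apply Set.Finite.subset (Set.finite_Icc ((b - n) / 2 - 1) (b / 2 + 1))
  intro j hj
  simp only [Function.mem_support] at hj
  have h1 : qbin (T 1) n (b - 2 * j) ≠ 0 := fun h => hj (by rw [h, mul_zero])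
  have h2 : 0 ≤ b - 2 * j := by by_contra h; exact h1 (qbin_neg_right _ (by omega))
  have h3 : b - 2 * j ≤ n := by by_contra h; exact h1 (qbin_of_lt _ (by omega))
  simp only [Set.mem_Icc]; omega

lemma m1_zero : m1 0 = 1 := by simp [m1]
lemma m1_succ (j : ℤ) : m1 (j + 1) = -m1 j := by simp [m1, zpow_add_one]
lemma m1_neg (j : ℤ) : m1 (-j) = m1 j := by simp [m1, zpow_neg, Int.units_inv_eq_self]

lemma T_split (a b c : ℤ) (h : a = b + c) : (T a : LaurentPolynomial ℤ) = T b * T c := by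
  rw [h, T_add]

lemma finsum_split3 {f g h : ℤ → LaurentPolynomial ℤ} (hf : (Function.support f).Finite)
    (hg : (Function.support g).Finite) (hh : (Function.support h).Finite) :
    ∑ᶠ j : ℤ, (f j + g j + h j) = (∑ᶠ j : ℤ, f j) + (∑ᶠ j : ℤ, g j) + (∑ᶠ j : ℤ, h j) := by
  have hfg : (Function.support fun j : ℤ => f j + g j).Finite := by
    apply (hf.union hg).subset
    intro j hj
    rw [Function.mem_support] at hj
    rw [Set.mem_union, Function.mem_support, Function.mem_support]
    by_contra hc
    push_neg at hc
    rw [hc.1, hc.2, add_zero] at hj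
    exact hj rfl
  rw [finsum_add_distrib hfg hh, finsum_add_distrib hf hg]

/-! ### The two sums and their recurrences -/

def BB (L : ℕ) : LaurentPolynomial ℤ :=
  ∑ᶠ j : ℤ, m1 j * T (2 * j ^ 2 - 2 * j) * qbin (T 1) (2 * L) (L - 2 * j)

def DD (L : ℕ) : LaurentPolynomial ℤ :=
  ∑ᶠ j : ℤ, m1 j * T (2 * j ^ 2) * qbin (T 1) (2 * L) (L + 1 - 2 * j)

lemma BB_zero : BB 0 = 1 := by
  unfold BB
  rw [finsum_eq_single _ (0 : ℤ)]
  · norm_num [m1_zero, T_zero]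
    exact qbin_zero_right _ le_rfl
  · intro x hx
    rcases lt_or_gt_of_ne hx with h | h
    · rw [qbin_of_lt _ (by push_cast; omega), mul_zero]
    · rw [qbin_neg_right _ (by push_cast; omega), mul_zero]

lemma DD_zero : DD 0 = 0 := by
  unfold DD
  apply finsum_eq_zero_of_forall_eq_zero
  intro x
  rcases le_or_gt x 0 with h | h
  · rw [qbin_of_lt _ (by push_cast; omega), mul_zero]
  · rw [qbin_neg_right _ (by push_cast; omega), mul_zero]

lemma recB (L : ℕ) : BB (L + 1) =
    (1 + T (2 * (L:ℤ) + 1)) * BB L + (T ((L:ℤ) + 1) - T ((L:ℤ) - 1)) * DD L := by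
  have step1 : BB (L + 1) = ∑ᶠ j : ℤ,
      ((m1 j * T (2 * j ^ 2 + ((L:ℤ) + 1))) * qbin (T 1) (2 * (L:ℤ)) ((L:ℤ) - 1 - 2 * j)
      + ((1 + T (2 * (L:ℤ) + 1)) * (m1 j * T (2 * j ^ 2 - 2 * j)))
          * qbin (T 1) (2 * (L:ℤ)) ((L:ℤ) - 2 * j)
      + (m1 j * T (2 * j ^ 2 - 4 * j + ((L:ℤ) + 1)))
          * qbin (T 1) (2 * (L:ℤ)) ((L:ℤ) + 1 - 2 * j)) := by
    unfold BB
    apply finsum_congr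
    intro j
    rw [show ((L + 1 : ℕ) : ℤ) = (L:ℤ) + 1 by push_cast; ring,
      show (2 : ℤ) * ((L:ℤ) + 1) = ((2 * L : ℕ) : ℤ) + 2 by push_cast; ring,
      qbin_expand (2 * L) ((L:ℤ) + 1 - 2 * j)]
    push_cast
    rw [T_split (2 * j ^ 2 + ((L:ℤ) + 1)) (2 * j ^ 2 - 2 * j) ((L:ℤ) + 1 + 2 * j) (by ring),
      T_split (2 * j ^ 2 - 4 * j + ((L:ℤ) + 1)) (2 * j ^ 2 - 2 * j) ((L:ℤ) + 1 - 2 * j) (by ring)]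
    ring_nf
  have hS2 : (∑ᶠ j : ℤ, ((1 + T (2 * (L:ℤ) + 1)) * (m1 j * T (2 * j ^ 2 - 2 * j)))
      * qbin (T 1) (2 * (L:ℤ)) ((L:ℤ) - 2 * j)) = (1 + T (2 * (L:ℤ) + 1)) * BB L := by
    unfold BB
    rw [mul_finsum' _ _ (supp_finite (fun j => m1 j * T (2 * j ^ 2 - 2 * j)) (2 * (L:ℤ)) (L:ℤ))]
    exact finsum_congr fun j => by ring
  have hS3 : (∑ᶠ j : ℤ, (m1 j * T (2 * j ^ 2 - 4 * j + ((L:ℤ) + 1)))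
        * qbin (T 1) (2 * (L:ℤ)) ((L:ℤ) + 1 - 2 * j))
      = ∑ᶠ j : ℤ, (-(m1 j * T (2 * j ^ 2 + ((L:ℤ) - 1))))
        * qbin (T 1) (2 * (L:ℤ)) ((L:ℤ) - 1 - 2 * j) := by
    rw [← finsum_comp_equiv (Equiv.addRight (1:ℤ))]
    apply finsum_congr
    intro j
    simp only [Equiv.coe_addRight]
    rw [m1_succ]
    ring_nf
  have hDD : DD L = ∑ᶠ j : ℤ,
      (m1 j * T (2 * j ^ 2)) * qbin (T 1) (2 * (L:ℤ)) ((L:ℤ) - 1 - 2 * j) := by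
    unfold DD
    rw [← finsum_comp_equiv (Equiv.neg ℤ)]
    apply finsum_congr
    intro j
    simp only [Equiv.neg_apply]
    rw [m1_neg, show (2 : ℤ) * (L:ℤ) = ((2 * L : ℕ) : ℤ) by push_cast; ring, qbin_symm]
    push_cast
    ring_nf
  have hS1S3 : (∑ᶠ j : ℤ, (m1 j * T (2 * j ^ 2 + ((L:ℤ) + 1)))
        * qbin (T 1) (2 * (L:ℤ)) ((L:ℤ) - 1 - 2 * j))
      + (∑ᶠ j : ℤ, (-(m1 j * T (2 * j ^ 2 + ((L:ℤ) - 1))))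
        * qbin (T 1) (2 * (L:ℤ)) ((L:ℤ) - 1 - 2 * j))
      = (T ((L:ℤ) + 1) - T ((L:ℤ) - 1)) * DD L := by
    rw [hDD, ← finsum_add_distrib (supp_finite _ _ _) (supp_finite _ _ _),
      mul_finsum' _ _ (supp_finite (fun j => m1 j * T (2 * j ^ 2)) (2 * (L:ℤ)) ((L:ℤ) - 1))]
    apply finsum_congr
    intro j
    rw [T_split (2 * j ^ 2 + ((L:ℤ) + 1)) ((L:ℤ) + 1) (2 * j ^ 2) (by ring),
      T_split (2 * j ^ 2 + ((L:ℤ) - 1)) ((L:ℤ) - 1) (2 * j ^ 2) (by ring)]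
    ring
  rw [step1, finsum_split3 (supp_finite _ _ _) (supp_finite _ _ _) (supp_finite _ _ _),
    hS2, hS3, add_right_comm, hS1S3]
  ring

lemma recD (L : ℕ) : DD (L + 1) =
    (1 + T (2 * (L:ℤ) + 1)) * DD L + (T (L:ℤ) - T ((L:ℤ) + 2)) * BB L := by
  have step1 : DD (L + 1) = ∑ᶠ j : ℤ,
      ((m1 j * T (2 * j ^ 2 + 2 * j + (L:ℤ))) * qbin (T 1) (2 * (L:ℤ)) ((L:ℤ) - 2 * j)
      + ((1 + T (2 * (L:ℤ) + 1)) * (m1 j * T (2 * j ^ 2)))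
          * qbin (T 1) (2 * (L:ℤ)) ((L:ℤ) + 1 - 2 * j)
      + (m1 j * T (2 * j ^ 2 - 2 * j + ((L:ℤ) + 2)))
          * qbin (T 1) (2 * (L:ℤ)) ((L:ℤ) + 2 - 2 * j)) := by
    unfold DD
    apply finsum_congr
    intro j
    rw [show ((L + 1 : ℕ) : ℤ) = (L:ℤ) + 1 by push_cast; ring,
      show (2 : ℤ) * ((L:ℤ) + 1) = ((2 * L : ℕ) : ℤ) + 2 by push_cast; ring,
      show ((L:ℤ) + 1) + 1 - 2 * j = (L:ℤ) + 2 - 2 * j by ring,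
      qbin_expand (2 * L) ((L:ℤ) + 2 - 2 * j)]
    push_cast
    rw [T_split (2 * j ^ 2 + 2 * j + (L:ℤ)) (2 * j ^ 2) ((L:ℤ) + 2 * j) (by ring),
      T_split (2 * j ^ 2 - 2 * j + ((L:ℤ) + 2)) (2 * j ^ 2) ((L:ℤ) + 2 - 2 * j) (by ring)]
    ring_nf
  have hS2 : (∑ᶠ j : ℤ, ((1 + T (2 * (L:ℤ) + 1)) * (m1 j * T (2 * j ^ 2)))
      * qbin (T 1) (2 * (L:ℤ)) ((L:ℤ) + 1 - 2 * j)) = (1 + T (2 * (L:ℤ) + 1)) * DD L := by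
    unfold DD
    rw [mul_finsum' _ _ (supp_finite (fun j => m1 j * T (2 * j ^ 2)) (2 * (L:ℤ)) ((L:ℤ) + 1))]
    exact finsum_congr fun j => by ring
  have hS3 : (∑ᶠ j : ℤ, (m1 j * T (2 * j ^ 2 - 2 * j + ((L:ℤ) + 2)))
        * qbin (T 1) (2 * (L:ℤ)) ((L:ℤ) + 2 - 2 * j))
      = ∑ᶠ j : ℤ, (-(m1 j * T (2 * j ^ 2 + 2 * j + ((L:ℤ) + 2))))
        * qbin (T 1) (2 * (L:ℤ)) ((L:ℤ) - 2 * j) := by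
    rw [← finsum_comp_equiv (Equiv.addRight (1:ℤ))]
    apply finsum_congr
    intro j
    simp only [Equiv.coe_addRight]
    rw [m1_succ]
    ring_nf
  have hBB : BB L = ∑ᶠ j : ℤ,
      (m1 j * T (2 * j ^ 2 + 2 * j)) * qbin (T 1) (2 * (L:ℤ)) ((L:ℤ) - 2 * j) := by
    unfold BB
    rw [← finsum_comp_equiv (Equiv.neg ℤ)]
    apply finsum_congr
    intro j
    simp only [Equiv.neg_apply]
    rw [m1_neg, show (2 : ℤ) * (L:ℤ) = ((2 * L : ℕ) : ℤ) by push_cast; ring, qbin_symm]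
    push_cast
    ring_nf
  have hS1S3 : (∑ᶠ j : ℤ, (m1 j * T (2 * j ^ 2 + 2 * j + (L:ℤ)))
        * qbin (T 1) (2 * (L:ℤ)) ((L:ℤ) - 2 * j))
      + (∑ᶠ j : ℤ, (-(m1 j * T (2 * j ^ 2 + 2 * j + ((L:ℤ) + 2))))
        * qbin (T 1) (2 * (L:ℤ)) ((L:ℤ) - 2 * j))
      = (T (L:ℤ) - T ((L:ℤ) + 2)) * BB L := by
    rw [hBB, ← finsum_add_distrib (supp_finite _ _ _) (supp_finite _ _ _),
      mul_finsum' _ _ (supp_finite (fun j => m1 j * T (2 * j ^ 2 + 2 * j)) (2 * (L:ℤ)) (L:ℤ))]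
    apply finsum_congr
    intro j
    rw [T_split (2 * j ^ 2 + 2 * j + (L:ℤ)) (L:ℤ) (2 * j ^ 2 + 2 * j) (by ring),
      T_split (2 * j ^ 2 + 2 * j + ((L:ℤ) + 2)) ((L:ℤ) + 2) (2 * j ^ 2 + 2 * j) (by ring)]
    ring
  rw [step1, finsum_split3 (supp_finite _ _ _) (supp_finite _ _ _) (supp_finite _ _ _),
    hS2, hS3, add_right_comm, hS1S3]
  ring

/-! ### The closed form, by joint induction -/

lemma one_add_T_neg_one_ne_zero : (1 + T (-1) : LaurentPolynomial ℤ) ≠ 0 := by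
  intro h
  have h3 : AddMonoidAlgebra.coeff (1 + T (-1) : LaurentPolynomial ℤ) 0 = 1 := by
    show (Finsupp.single (0:ℤ) (1:ℤ) + Finsupp.single (-1:ℤ) (1:ℤ)) 0 = 1
    rw [Finsupp.add_apply, Finsupp.single_apply, Finsupp.single_apply]
    norm_num
  rw [h] at h3
  simp at h3

lemma main_closed (L : ℕ) :
    BB L = T (L:ℤ) * ∏ k ∈ Finset.range L, (1 + T (2 * (k:ℤ) - 1)) ∧
    (1 + T (-1)) * DD L = (1 - T (2 * (L:ℤ))) * ∏ k ∈ Finset.range L, (1 + T (2 * (k:ℤ) - 1)) := by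
  induction L with
  | zero =>
    constructor
    · simp [BB_zero, T_zero]
    · simp [DD_zero, T_zero]
  | succ L ih =>
    obtain ⟨ihB, ihD⟩ := ih
    constructor
    · apply mul_left_cancel₀ one_add_T_neg_one_ne_zero
      rw [recB L, mul_add, ihB,
        show (1 + T (-1)) * ((T ((L:ℤ) + 1) - T ((L:ℤ) - 1)) * DD L)
          = (T ((L:ℤ) + 1) - T ((L:ℤ) - 1)) * ((1 + T (-1)) * DD L) by ring,
        ihD, prod_range_succ,
        mul_comm (∏ k ∈ Finset.range L, (1 + T (2 * (k:ℤ) - 1))) (1 + T (2 * (L:ℤ) - 1)),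
        show (((L + 1 : ℕ)):ℤ) = (L:ℤ) + 1 by push_cast; ring]
      generalize (∏ k ∈ Finset.range L, (1 + (T (2 * (k:ℤ) - 1) : LaurentPolynomial ℤ))) = R
      simp only [mul_add, add_mul, mul_sub, sub_mul, mul_one, one_mul, ← mul_assoc, ← T_add]
      ring_nf
    · apply mul_left_cancel₀ one_add_T_neg_one_ne_zero
      rw [recD L, mul_add, ihB,
        show (1 + T (-1)) * ((1 + T (2 * (L:ℤ) + 1)) * DD L)
          = (1 + T (2 * (L:ℤ) + 1)) * ((1 + T (-1)) * DD L) by ring,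
        ihD, prod_range_succ,
        mul_comm (∏ k ∈ Finset.range L, (1 + T (2 * (k:ℤ) - 1))) (1 + T (2 * (L:ℤ) - 1)),
        show (2 * ((L + 1 : ℕ):ℤ)) = 2 * (L:ℤ) + 2 by push_cast; ring]
      generalize (∏ k ∈ Finset.range L, (1 + (T (2 * (k:ℤ) - 1) : LaurentPolynomial ℤ))) = R
      simp only [mul_add, add_mul, mul_sub, sub_mul, mul_one, one_mul, ← mul_assoc, ← T_add]
      ring_nf

/-! ### Nonnegativity of coefficients -/

lemma nn_T (a : ℤ) : ∀ n : ℤ, 0 ≤ AddMonoidAlgebra.coeff (T a : LaurentPolynomial ℤ) n := by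
  intro n
  show 0 ≤ (Finsupp.single a (1:ℤ)) n
  rw [Finsupp.single_apply]
  split <;> norm_num

lemma nn_one : ∀ n : ℤ, 0 ≤ AddMonoidAlgebra.coeff (1 : LaurentPolynomial ℤ) n := by
  have := nn_T 0
  rwa [T_zero] at this

lemma nn_add {p r : LaurentPolynomial ℤ} (hp : ∀ n : ℤ, 0 ≤ AddMonoidAlgebra.coeff p n)
    (hr : ∀ n : ℤ, 0 ≤ AddMonoidAlgebra.coeff r n) :
    ∀ n : ℤ, 0 ≤ AddMonoidAlgebra.coeff (p + r : LaurentPolynomial ℤ) n := by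
  intro n
  show 0 ≤ (AddMonoidAlgebra.coeff p + AddMonoidAlgebra.coeff r) n
  rw [Finsupp.add_apply]
  exact add_nonneg (hp n) (hr n)

lemma nn_mul {p r : LaurentPolynomial ℤ} (hp : ∀ n : ℤ, 0 ≤ AddMonoidAlgebra.coeff p n)
    (hr : ∀ n : ℤ, 0 ≤ AddMonoidAlgebra.coeff r n) :
    ∀ n : ℤ, 0 ≤ AddMonoidAlgebra.coeff (p * r : LaurentPolynomial ℤ) n := by
  classical
  intro n
  rw [AddMonoidAlgebra.mul_apply]
  rw [Finsupp.sum]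
  apply Finset.sum_nonneg
  intro a _
  rw [Finsupp.sum]
  apply Finset.sum_nonneg
  intro b _
  split
  · exact mul_nonneg (hp a) (hr b)
  · exact le_refl 0

theorem stmt5 (L : ℕ) :
    (∑ᶠ j : ℤ, m1 j * T (2 * j ^ 2 - 2 * j) * qbin (T 1) (2 * L) (L - 2 * j)) =
      T L * ∏ k ∈ Finset.range L, (1 + T (2 * (k : ℤ) - 1)) ∧
    ∀ n : ℤ, 0 ≤
      (AddMonoidAlgebra.coeff (∑ᶠ j : ℤ, m1 j * T (2 * j ^ 2 - 2 * j) * qbin (T 1) (2 * L) (L - 2 * j)) : ℤ →₀ ℤ) n := by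
  have hmain := (main_closed L).1
  have hBBeq : BB L = ∑ᶠ j : ℤ, m1 j * T (2 * j ^ 2 - 2 * j) * qbin (T 1) (2 * L) (L - 2 * j) :=
    rfl
  constructor
  · rw [← hBBeq]
    exact hmain
  · rw [← hBBeq, hmain]
    apply nn_mul (nn_T _)
    apply Finset.prod_induction _ (fun p : LaurentPolynomial ℤ => ∀ n : ℤ, 0 ≤ AddMonoidAlgebra.coeff p n)
      (fun a b ha hb => nn_mul ha hb) nn_one
    intro k _
    exact nn_add nn_one (nn_T _)
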